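/- Fix 0 ≤ β < 1. For every k ≥ 1, (log(k+1))/4 ≤ sum over i from 0 to k-1 of (c_i^β)^2 ≤ (1 + log k)/(1-β)^2, where c_i^β = sum_{j=0}^{i} β^{i-j} r_j r_{i-j} and r_j = binom(2j,j)/4^j. -/

import Mathlib

noncomputable def r (j : ℕ) : ℝ := (Nat.choose (2*j) j : ℝ) / 4^j

noncomputable def c (β : ℝ) (i : ℕ) : ℝ :=
  ∑ j ∈ Finset.range (i + 1), β^(i - j) * r j * r (i - j)

lemma r_eq (n : ℕ) : r n = (Nat.centralBinom n : ℝ) / 4^n := rfl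

lemma r_pos (n : ℕ) : 0 < r n := by
  rw [r_eq]
  apply div_pos
  · exact_mod_cast Nat.centralBinom_pos n
  · positivity

lemma r_zero : r 0 = 1 := by simp [r]

lemma r_succ (n : ℕ) : r (n+1) = r n * (2*n+1) / (2*(n+1)) := by
  have h := Nat.succ_mul_centralBinom_succ n
  have h' : ((n:ℝ)+1) * (Nat.centralBinom (n+1) : ℝ) = 2 * (2*n+1) * Nat.centralBinom n := by
    exact_mod_cast h
  rw [r_eq, r_eq]
  have h4 : (4:ℝ)^(n+1) = 4^n * 4 := by ring
  field_simp [h4]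
  rw [h4]; linear_combination (2 * (4:ℝ)^n) * h'

lemma r_sq_upper (n : ℕ) : (r n)^2 ≤ 1 / (n+1) := by
  induction n with
  | zero => simp [r_zero]
  | succ n ih =>
    rw [r_succ]
    have hp := r_pos n
    have hn : (0:ℝ) < (n:ℝ) + 1 := by positivity
    have h1 : (r n)^2 * ((n:ℝ)+1) ≤ 1 := by
      rw [← le_div_iff₀ hn]; exact ih
    rw [div_pow, div_le_div_iff₀ (by positivity) (by positivity)]
    push_cast
    have h2 : (0:ℝ) ≤ (2*(n:ℝ)+1)^2 * ((n:ℝ)+2) := by positivity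
    nlinarith [mul_le_mul_of_nonneg_right h1 h2, sq_nonneg (r n), hn]

lemma r_sq_lower (n : ℕ) : 1 / (4*(n+1)) ≤ (r n)^2 := by
  have main : ∀ m : ℕ, 1 ≤ m → 1 / (4*(m:ℝ)) ≤ (r m)^2 := by
    intro m hm
    induction m, hm using Nat.le_induction with
    | base =>
      have : r 1 = 1/2 := by norm_num [r]
      rw [this]; norm_num
    | succ n hn ih =>
      rw [r_succ]
      have hp := r_pos n
      have hn' : (0:ℝ) < (n:ℝ) := by exact_mod_cast hn
      have h1 : 1 ≤ (r n)^2 * (4*(n:ℝ)) := by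
        rw [← div_le_iff₀ (by positivity)]; exact ih
      rw [div_pow, div_le_div_iff₀ (by positivity) (by positivity)]
      push_cast
      have h2 : (0:ℝ) ≤ (2*(n:ℝ)+1)^2 * ((n:ℝ)+1) := by positivity
      nlinarith [mul_le_mul_of_nonneg_right h1 h2, sq_nonneg (r n), hn']
  rcases Nat.eq_zero_or_pos n with h | h
  · subst h; rw [r_zero]; norm_num
  · calc 1 / (4*((n:ℝ)+1)) ≤ 1 / (4*(n:ℝ)) := by
          have hn' : (0:ℝ) < (n:ℝ) := by exact_mod_cast h
          gcongr; linarith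
      _ ≤ (r n)^2 := main n h

lemma c_nonneg (β : ℝ) (hβ0 : 0 ≤ β) (i : ℕ) : 0 ≤ c β i := by
  apply Finset.sum_nonneg
  intro j _
  have := r_pos j; have := r_pos (i - j)
  positivity

lemma c_lower (β : ℝ) (hβ0 : 0 ≤ β) (i : ℕ) : r i ≤ c β i := by
  have h := Finset.single_le_sum (f := fun j => β^(i-j) * r j * r (i-j))
    (fun j _ => by have := (r_pos j).le; have := (r_pos (i-j)).le; positivity)
    (Finset.self_mem_range_succ i)
  simpa [r_zero, c] using h

lemma c_upper (β : ℝ) (hβ0 : 0 ≤ β) (hβ1 : β < 1) (i : ℕ) :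
    c β i ≤ (1/(1-β)) * Real.sqrt (1/(i+1)) := by
  have hb : (0:ℝ) < 1 - β := by linarith
  have step : ∀ j ∈ Finset.range (i+1),
      β^(i-j) * r j * r (i-j) ≤ β^(i-j) * Real.sqrt (1/(i+1)) := by
    intro j hj
    rw [Finset.mem_range] at hj
    have hj' : j ≤ i := Nat.lt_succ_iff.mp hj
    have h1 : r j ≤ Real.sqrt (1/(j+1)) := by
      rw [← Real.sqrt_sq (r_pos j).le]
      exact Real.sqrt_le_sqrt (r_sq_upper j)
    have h2 : r (i-j) ≤ Real.sqrt (1/((i-j:ℕ)+1)) := by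
      rw [← Real.sqrt_sq (r_pos (i-j)).le]
      exact Real.sqrt_le_sqrt (r_sq_upper _)
    have h3 : Real.sqrt (1/(j+1)) * Real.sqrt (1/((i-j:ℕ)+1)) ≤ Real.sqrt (1/(i+1)) := by
      rw [← Real.sqrt_mul (by positivity)]
      apply Real.sqrt_le_sqrt
      rw [div_mul_div_comm, one_mul]
      have hji : ((i:ℝ)-(j:ℝ)) = ((i-j:ℕ):ℝ) := by
        rw [Nat.cast_sub hj']
      have key : (i:ℝ)+1 ≤ ((j:ℝ)+1) * (((i-j:ℕ):ℝ)+1) := by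
        rw [← hji]
        have hj'' : (j:ℝ) ≤ i := by exact_mod_cast hj'
        nlinarith [mul_nonneg (Nat.cast_nonneg j : (0:ℝ) ≤ j) (by linarith : (0:ℝ) ≤ (i:ℝ)-j)]
      exact one_div_le_one_div_of_le (by positivity) key
    calc β^(i-j) * r j * r (i-j)
        ≤ β^(i-j) * (Real.sqrt (1/(j+1)) * Real.sqrt (1/((i-j:ℕ)+1))) := by
          rw [mul_assoc]
          exact mul_le_mul_of_nonneg_left
            (mul_le_mul h1 h2 (r_pos _).le (Real.sqrt_nonneg _)) (by positivity)
      _ ≤ β^(i-j) * Real.sqrt (1/(i+1)) :=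
          mul_le_mul_of_nonneg_left h3 (by positivity)
  have hsum : (∑ m ∈ Finset.range (i+1), β^m) ≤ 1/(1-β) := by
    rw [geom_sum_eq (ne_of_lt hβ1)]
    rw [show (β^(i+1) - 1)/(β - 1) = (1 - β^(i+1))/(1-β) by
      rw [show (1:ℝ) - β^(i+1) = -(β^(i+1)-1) by ring, show (1:ℝ)-β = -(β-1) by ring,
        neg_div_neg_eq]]
    rw [div_le_div_iff₀ hb hb]
    nlinarith [pow_nonneg hβ0 (i+1)]
  calc c β i ≤ ∑ j ∈ Finset.range (i+1), β^(i-j) * Real.sqrt (1/(i+1)) :=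
        Finset.sum_le_sum step
    _ = (∑ j ∈ Finset.range (i+1), β^(i-j)) * Real.sqrt (1/(i+1)) := by
        rw [Finset.sum_mul]
    _ = (∑ m ∈ Finset.range (i+1), β^m) * Real.sqrt (1/(i+1)) := by
        congr 1
        rw [← Finset.sum_range_reflect (fun m => β^m) (i+1)]
        simp
    _ ≤ (1/(1-β)) * Real.sqrt (1/(i+1)) :=
        mul_le_mul_of_nonneg_right hsum (Real.sqrt_nonneg _)

theorem stmt_15 (β : ℝ) (hβ0 : 0 ≤ β) (hβ1 : β < 1) (k : ℕ) (hk : 1 ≤ k) :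
    Real.log (k + 1) / 4 ≤ ∑ i ∈ Finset.range k, (c β i)^2 ∧
      ∑ i ∈ Finset.range k, (c β i)^2 ≤ (1 + Real.log k) / (1 - β)^2 := by
  have hb : (0:ℝ) < 1 - β := by linarith
  have hharm : ((harmonic k : ℚ) : ℝ) = ∑ i ∈ Finset.range k, 1/((i:ℝ)+1) := by
    rw [harmonic]
    push_cast
    apply Finset.sum_congr rfl
    intro i _
    rw [one_div]
  constructor
  · calc Real.log (k+1) / 4 ≤ ((harmonic k : ℚ) : ℝ) / 4 := by
          have := log_add_one_le_harmonic k
          push_cast at this ⊢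
          linarith
      _ = ∑ i ∈ Finset.range k, 1/(4*((i:ℝ)+1)) := by
          rw [hharm, Finset.sum_div]
          apply Finset.sum_congr rfl
          intro i _
          rw [div_div]
          ring_nf
      _ ≤ ∑ i ∈ Finset.range k, (c β i)^2 := by
          apply Finset.sum_le_sum
          intro i _
          calc 1/(4*((i:ℝ)+1)) ≤ (r i)^2 := r_sq_lower i
            _ ≤ (c β i)^2 := by
                have h1 := c_lower β hβ0 i
                have h2 := (r_pos i).le
                nlinarith
  · calc ∑ i ∈ Finset.range k, (c β i)^2
        ≤ ∑ i ∈ Finset.range k, (1/(1-β))^2 * (1/((i:ℝ)+1)) := by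
          apply Finset.sum_le_sum
          intro i _
          have h1 := c_upper β hβ0 hβ1 i
          have h2 := c_nonneg β hβ0 i
          have h3 : ((1/(1-β)) * Real.sqrt (1/((i:ℝ)+1)))^2 = (1/(1-β))^2 * (1/((i:ℝ)+1)) := by
            rw [mul_pow, Real.sq_sqrt (by positivity)]
          calc (c β i)^2 ≤ ((1/(1-β)) * Real.sqrt (1/((i:ℝ)+1)))^2 := by
                apply pow_le_pow_left₀ h2 h1
            _ = _ := h3
      _ = (1/(1-β))^2 * ((harmonic k : ℚ) : ℝ) := by
          rw [← Finset.mul_sum, hharm]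
      _ ≤ (1/(1-β))^2 * (1 + Real.log k) :=
          mul_le_mul_of_nonneg_left (harmonic_le_one_add_log k) (by positivity)
      _ = (1 + Real.log k) / (1-β)^2 := by
          field_simp
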